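/- Let q be a prime power with q ≥ 3, and let A, B be adjacent invertible n×n hermitian matrices over F_{q^2} (i.e., rank(A − B) = 1). Write B − A = x x* up to a scalar, i.e., B = A + μ x x* for some nonzero μ ∈ F_q and x ∈ F_{q^2}^n. Then the set {A + λ x x* : λ ∈ F_q, A + λ x x* invertible} has exactly q elements if x* A^{-1} x = 0, and exactly q − 1 elements if x* A^{-1} x ≠ 0. -/

import Mathlib

open Matrix

/-- The fixed field of `x ↦ x ^ q` in a field with `q ^ 2` elements has `q`
elements. -/
lemma fixed_field_card (q : ℕ) (hq2 : 2 ≤ q)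
    (F : Type) [Field F] [Fintype F] [DecidableEq F]
    (hF : Fintype.card F = q ^ 2) :
    (Finset.univ.filter (fun a : F => a ^ q = a)).card = q := by
  have hq1 : 1 ≤ q - 1 := by omega
  have hqpos : 0 < q - 1 := hq1
  -- get a primitive (q^2 - 1)-th root of unity
  obtain ⟨g, hg⟩ := IsCyclic.exists_generator (α := Fˣ)
  have horder : orderOf g = q ^ 2 - 1 := by
    rw [orderOf_eq_card_of_forall_mem_zpowers hg, Nat.card_eq_fintype_card,
      Fintype.card_units, hF]
  have hprim : IsPrimitiveRoot (g : F) (q ^ 2 - 1) := by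
    have := IsPrimitiveRoot.orderOf (ζ := (g : F))
    rwa [orderOf_units, horder] at this
  have hfactor : q ^ 2 - 1 = (q + 1) * (q - 1) := by
    obtain ⟨m, rfl⟩ : ∃ m, q = m + 2 := ⟨q - 2, by omega⟩
    have h1 : (m + 2) ^ 2 = m ^ 2 + 4 * m + 4 := by ring
    have h2 : (m + 2 + 1) * (m + 2 - 1) = m ^ 2 + 4 * m + 3 := by
      show (m + 3) * (m + 1) = m ^ 2 + 4 * m + 3; ring
    omega
  have hpos : 0 < q ^ 2 - 1 := by nlinarith
  have hroot : IsPrimitiveRoot ((g : F) ^ (q + 1)) (q - 1) :=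
    hprim.pow hpos hfactor
  have hcard : (Polynomial.nthRootsFinset (q - 1) (1 : F)).card = q - 1 :=
    hroot.card_nthRootsFinset
  have h0 : (0 : F) ∉ Polynomial.nthRootsFinset (q - 1) (1 : F) := by
    intro h
    rw [Polynomial.mem_nthRootsFinset hqpos (1 : F)] at h
    simp [zero_pow hqpos.ne'] at h
  have hset : (Finset.univ.filter (fun a : F => a ^ q = a))
      = insert (0 : F) (Polynomial.nthRootsFinset (q - 1) (1 : F)) := by
    ext a
    simp only [Finset.mem_filter, Finset.mem_univ, true_and, Finset.mem_insert,
      Polynomial.mem_nthRootsFinset hqpos (1 : F)]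
    constructor
    · intro h
      rcases eq_or_ne a 0 with rfl | ha
      · exact Or.inl rfl
      · refine Or.inr ?_
        have hq' : q = (q - 1) + 1 := by omega
        rw [hq', pow_succ] at h
        have : a ^ (q - 1) * a = 1 * a := by rw [h, one_mul]
        exact mul_right_cancel₀ ha this
    · rintro (rfl | h)
      · exact zero_pow (by omega)
      · have hq' : q = (q - 1) + 1 := by omega
        rw [hq', pow_succ, h, one_mul]
  rw [hset, Finset.card_insert_of_notMem h0, hcard]
  omega

/-- For `q ≥ 3` and adjacent invertible hermitian matrices `A` and
`B = A + μ x x*`, the maximal clique through `A` and `B`, i.e. the set of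
invertible matrices `A + λ x x*` with `λ` in the fixed field, has exactly `q`
elements if `x* A⁻¹ x = 0` and exactly `q - 1` elements otherwise. -/
theorem maximal_clique_card
    (q : ℕ) (hq : IsPrimePow q) (hq3 : 3 ≤ q)
    (F : Type) [Field F] [Fintype F] [DecidableEq F]
    (hF : Fintype.card F = q ^ 2) (n : ℕ)
    (A : Matrix (Fin n) (Fin n) F)
    (hHerm : (A.map (· ^ q))ᵀ = A) (hA : IsUnit A.det)
    (x : Fin n → F) (hx : x ≠ 0) (μ : F) (hμ : μ ^ q = μ) (hμ0 : μ ≠ 0)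
    (hB : IsUnit (A + μ • Matrix.vecMulVec x (fun i => (x i) ^ q)).det) :
    {M : Matrix (Fin n) (Fin n) F | ∃ lam : F, lam ^ q = lam ∧
        M = A + lam • Matrix.vecMulVec x (fun i => (x i) ^ q) ∧
        IsUnit M.det}.ncard =
      if (fun i => (x i) ^ q) ⬝ᵥ (A⁻¹ *ᵥ x) = 0 then q else q - 1 := by
  classical
  obtain ⟨p, k, hpp, hk, hpk⟩ := hq
  have hp' : p.Prime := Nat.prime_iff.mpr hpp
  haveI := Fact.mk hp'
  -- the characteristic of `F` is `p`
  have hq0 : 0 < q := by omega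
  haveI hcharF : CharP F p := by
    have h1 : (ringChar F).Prime := CharP.char_is_prime F (ringChar F)
    obtain ⟨m, hm, hcard⟩ := FiniteField.card F (ringChar F)
    have hdvd : ringChar F ∣ p := by
      have : ringChar F ∣ q ^ 2 := by
        rw [← hF, hcard]; exact dvd_pow_self _ (by positivity)
      rw [← hpk] at this
      exact h1.dvd_of_dvd_pow (h1.dvd_of_dvd_pow (by rwa [← pow_mul] at this))
    have : ringChar F = p := ((Nat.prime_dvd_prime_iff_eq h1 hp').mp hdvd)
    exact this ▸ ringChar.charP F
  -- the `q`-power map is a ring homomorphism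
  set σ : F →+* F := iterateFrobenius F p k with hσdef
  have hσ : ∀ a : F, σ a = a ^ q := fun a => by
    rw [hσdef, iterateFrobenius_def, hpk]
  have hσ2 : ∀ a : F, σ (a ^ q) = a := fun a => by
    rw [hσ, ← pow_mul, ← pow_two, ← hF, FiniteField.pow_card]
  set w : Fin n → F := fun i => (x i) ^ q with hw
  set V : Matrix (Fin n) (Fin n) F := Matrix.vecMulVec x w with hV
  set c : F := w ⬝ᵥ (A⁻¹ *ᵥ x) with hc
  -- `A⁻¹` is hermitian
  have hmap : ∀ M : Matrix (Fin n) (Fin n) F, M.map (· ^ q) = M.map σ := by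
    intro M; ext i j; simp [hσ]
  have hA' : (A.map σ)ᵀ = A := by rw [← hmap, hHerm]
  have h2 : (A.map σ)⁻¹ = A⁻¹.map σ :=
    inv_eq_left_inv (by
      rw [← Matrix.map_mul, Matrix.nonsing_inv_mul A hA,
        Matrix.map_one σ σ.map_zero σ.map_one])
  have hinv : (A⁻¹.map σ)ᵀ = A⁻¹ := by
    rw [← h2, Matrix.transpose_nonsing_inv, hA']
  -- `c` lies in the fixed field
  have hcq : c ^ q = c := by
    rw [← hσ]
    have hexp : c = ∑ j, ∑ l, w j * (A⁻¹ j l * x l) := by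
      rw [hc]; simp [dotProduct, Matrix.mulVec, Finset.mul_sum]
    rw [hexp, map_sum]
    simp only [map_sum, _root_.map_mul]
    have hterm : ∀ j l, σ (w j) * (σ (A⁻¹ j l) * σ (x l)) = w l * (A⁻¹ l j * x j) := by
      intro j l
      have h1 : σ (w j) = x j := hσ2 (x j)
      have h2 : σ (A⁻¹ j l) = A⁻¹ l j := by
        conv_rhs => rw [← hinv]
        simp [Matrix.transpose_apply, Matrix.map_apply]
      have h3 : σ (x l) = w l := hσ (x l)
      rw [h1, h2, h3]; ring
    calc (∑ j, ∑ l, σ (w j) * (σ (A⁻¹ j l) * σ (x l)))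
        = ∑ j, ∑ l, w l * (A⁻¹ l j * x j) := by
          refine Finset.sum_congr rfl fun j _ => Finset.sum_congr rfl fun l _ => hterm j l
      _ = ∑ l, ∑ j, w l * (A⁻¹ l j * x j) := Finset.sum_comm
  -- determinant formula
  have hdet : ∀ lam : F, (A + lam • V).det = A.det * (1 + lam * c) := by
    intro lam
    have h1 : lam • V = Matrix.replicateCol Unit (lam • x) * Matrix.replicateRow Unit w := by
      rw [hV, ← Matrix.vecMulVec_eq Unit]
      ext i j
      simp [Matrix.vecMulVec_apply, mul_assoc]
    rw [h1, Matrix.det_add_replicateCol_mul_replicateRow hA]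
    congr 1
    rw [← Matrix.replicateRow_vecMul, Matrix.replicateRow_mul_replicateCol]
    rw [Matrix.det_unique]
    simp only [Matrix.add_apply, Matrix.one_apply_eq, Matrix.of_apply]
    rw [dotProduct_smul, hc, dotProduct_mulVec]
    rfl
  -- the clique as an image
  have hVne : V ≠ 0 := by
    obtain ⟨i, hi⟩ : ∃ i, x i ≠ 0 := by
      by_contra h
      push_neg at h
      exact hx (funext h)
    intro h0
    have : V i i = 0 := by rw [h0]; rfl
    rw [hV, Matrix.vecMulVec_apply] at this
    exact (mul_ne_zero hi (pow_ne_zero q hi)) this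
  have hfinj : Function.Injective (fun lam : F => A + lam • V) := by
    intro a b hab
    simp only [add_right_inj] at hab
    by_contra hne
    apply hVne
    have := sub_eq_zero.mpr hab
    rw [← sub_smul] at this
    exact (smul_eq_zero.mp this).resolve_left (sub_ne_zero.mpr hne)
  have himg : {M : Matrix (Fin n) (Fin n) F | ∃ lam : F, lam ^ q = lam ∧
        M = A + lam • Matrix.vecMulVec x (fun i => (x i) ^ q) ∧
        IsUnit M.det}
      = (fun lam : F => A + lam • V) ''
        {lam : F | lam ^ q = lam ∧ 1 + lam * c ≠ 0} := by
    ext M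
    simp only [Set.mem_setOf_eq, Set.mem_image]
    constructor
    · rintro ⟨lam, h1, rfl, h3⟩
      refine ⟨lam, ⟨h1, ?_⟩, rfl⟩
      intro h0
      rw [hdet lam, h0, mul_zero] at h3
      exact one_ne_zero (isUnit_zero_iff.mp h3).symm
    · rintro ⟨lam, ⟨h1, h2⟩, rfl⟩
      refine ⟨lam, h1, rfl, ?_⟩
      rw [hdet lam, isUnit_iff_ne_zero]
      exact mul_ne_zero (isUnit_iff_ne_zero.mp hA) h2
  rw [himg, Set.ncard_image_of_injective _ hfinj]
  have hsetfin : {lam : F | lam ^ q = lam ∧ 1 + lam * c ≠ 0}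
      = ↑(Finset.univ.filter (fun lam : F => lam ^ q = lam ∧ 1 + lam * c ≠ 0)) := by
    ext a; simp
  rw [hsetfin, Set.ncard_coe_finset]
  by_cases hc0 : c = 0
  · rw [if_pos hc0]
    have heq : Finset.univ.filter (fun lam : F => lam ^ q = lam ∧ 1 + lam * c ≠ 0)
        = Finset.univ.filter (fun lam : F => lam ^ q = lam) := by
      apply Finset.filter_congr
      intro a _
      simp [hc0]
    rw [heq, fixed_field_card q (by omega) F hF]
  · rw [if_neg hc0]
    have hfix : (-c⁻¹) ^ q = -c⁻¹ := by
      rw [← hσ, map_neg, map_inv₀, hσ, hcq]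
    have hiff : ∀ lam : F, (1 + lam * c ≠ 0) ↔ lam ≠ -c⁻¹ := by
      intro lam
      rw [not_iff_not]
      constructor
      · intro h
        field_simp at h ⊢
        linear_combination h
      · rintro rfl
        field_simp
        ring
    have hsplit : Finset.univ.filter (fun lam : F => lam ^ q = lam ∧ 1 + lam * c ≠ 0)
        = (Finset.univ.filter (fun lam : F => lam ^ q = lam)).erase (-c⁻¹) := by
      ext a
      simp only [Finset.mem_filter, Finset.mem_univ, true_and, Finset.mem_erase]
      rw [hiff a, and_comm]
    rw [hsplit, Finset.card_erase_of_mem (by simp [hfix]),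
      fixed_field_card q (by omega) F hF]
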